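/- Let V be a finite-dimensional real inner product space, b ∈ V with ‖b‖ = 1, g ∈ ℝ with |g| < 2, h = √(1 − g²/4), and let q, v, A, B, t, λ be as in the Finsleroid setting; for y with q(y) > 0 put β_y(w) = ⟨b,w⟩ + (g/2)⟨v(y),w⟩/q(y). Then for y₁, y₂ with q(y₁) > 0 and q(y₂) > 0, the mixed second derivative of λ (first in the first argument, then in the second) at (y₁,y₂), applied to (w₁, w₂), equals [β_{y₁}(w₁)β_{y₂}(w₂) + h²(⟨w₁,w₂⟩ − ⟨b,w₁⟩⟨b,w₂⟩)]/√(B(y₁)B(y₂)) − (β_{y₁}(w₁)A(y₂) + h²⟨v(y₂),w₁⟩)·⟨t(y₂),w₂⟩/(B(y₂)√(B(y₁)B(y₂))) − (⟨t(y₁),w₁⟩/B(y₁))·[(β_{y₂}(w₂)A(y₁) + h²⟨v(y₁),w₂⟩)/√(B(y₁)B(y₂)) − λ(y₁,y₂)⟨t(y₂),w₂⟩/B(y₂)]. -/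

import Mathlib

open scoped InnerProductSpace

private theorem aux_qD {V : Type*} [NormedAddCommGroup V] [InnerProductSpace ℝ V]
    (b : V) (q : V → ℝ)
    (hq : ∀ y : V, q y = Real.sqrt (‖y‖ ^ 2 - ⟪b, y⟫_ℝ ^ 2))
    (v : V → V) (hv : ∀ y : V, v y = y - ⟪b, y⟫_ℝ • b) :
    ∀ y : V, 0 < q y → HasFDerivAt q ((q y)⁻¹ • innerSL ℝ (v y)) y := by
  intro y hy
  have hr : 0 < ‖y‖ ^ 2 - ⟪b, y⟫_ℝ ^ 2 := Real.sqrt_pos.mp (by rw [← hq y]; exact hy)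
  have hD : HasFDerivAt (fun x : V => ‖x‖ ^ 2 - ⟪b, x⟫_ℝ ^ 2)
      (2 • innerSL ℝ (v y)) y := by
    have h1 : HasFDerivAt (fun x : V => ‖x‖ ^ 2) (2 • innerSL ℝ y) y := by
      simpa using (hasFDerivAt_id y).norm_sq
    have h2 : HasFDerivAt (fun x : V => ⟪b, x⟫_ℝ) (innerSL ℝ b) y :=
      (innerSL ℝ b).hasFDerivAt
    have h3 := h2.mul h2
    have hfun : (fun x : V => ‖x‖ ^ 2 - ⟪b, x⟫_ℝ ^ 2)
        = (fun x : V => ‖x‖ ^ 2 - ⟪b, x⟫_ℝ * ⟪b, x⟫_ℝ) := by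
      funext x; ring
    rw [hfun]
    refine (h1.sub h3).congr_fderiv ?_
    ext w
    simp only [ContinuousLinearMap.smul_apply, ContinuousLinearMap.sub_apply,
      ContinuousLinearMap.add_apply, innerSL_apply_apply, smul_eq_mul, two_smul, hv,
      inner_sub_left, real_inner_smul_left]
    ring_nf
  have hs := (Real.hasDerivAt_sqrt (ne_of_gt hr)).comp_hasFDerivAt y hD
  have : q = fun x : V => Real.sqrt (‖x‖ ^ 2 - ⟪b, x⟫_ℝ ^ 2) := funext hq
  rw [this]
  refine hs.congr_fderiv ?_
  ext w
  simp only [ContinuousLinearMap.smul_apply, smul_eq_mul, innerSL_apply_apply, hq y]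
  ring

private theorem aux_BD {V : Type*} [NormedAddCommGroup V] [InnerProductSpace ℝ V]
    (b : V) (g : ℝ) (q B : V → ℝ) (v t : V → V)
    (hq : ∀ y : V, q y = Real.sqrt (‖y‖ ^ 2 - ⟪b, y⟫_ℝ ^ 2))
    (hv : ∀ y : V, v y = y - ⟪b, y⟫_ℝ • b)
    (hB : ∀ y : V, B y = ⟪b, y⟫_ℝ ^ 2 + g * ⟪b, y⟫_ℝ * q y + q y ^ 2)
    (ht : ∀ y : V, t y = y + (g / 2) • (q y • b + (⟪b, y⟫_ℝ / q y) • v y)) :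
    ∀ y : V, 0 < q y → HasFDerivAt B ((2 : ℝ) • innerSL ℝ (t y)) y := by
  intro y hy
  have hq' := aux_qD b q hq v hv y hy
  have h2 : HasFDerivAt (fun x : V => ⟪b, x⟫_ℝ) (innerSL ℝ b) y :=
    (innerSL ℝ b).hasFDerivAt
  have hfun : B = fun x : V =>
      ⟪b, x⟫_ℝ * ⟪b, x⟫_ℝ + g * ⟪b, x⟫_ℝ * q x + q x * q x := by
    funext x; rw [hB x]; ring
  have hD := ((h2.mul h2).add ((h2.const_mul g).mul hq')).add (hq'.mul hq')
  rw [hfun]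
  refine hD.congr_fderiv ?_
  ext w
  simp only [ContinuousLinearMap.smul_apply, ContinuousLinearMap.add_apply,
    innerSL_apply_apply, smul_eq_mul, ht y, hv y, inner_add_left, real_inner_smul_left,
    inner_sub_left]
  field_simp
  ring

private theorem aux_Bpos {V : Type*} [NormedAddCommGroup V] [InnerProductSpace ℝ V]
    (b : V) (g : ℝ) (hg : |g| < 2) (q B : V → ℝ)
    (hB : ∀ y : V, B y = ⟪b, y⟫_ℝ ^ 2 + g * ⟪b, y⟫_ℝ * q y + q y ^ 2) :
    ∀ y : V, 0 < q y → 0 < B y := by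
  intro y hy
  have hg4 : g ^ 2 < 4 := by
    have := abs_lt.mp hg
    nlinarith
  rw [hB y]
  nlinarith [sq_nonneg (⟪b, y⟫_ℝ + g / 2 * q y), mul_pos hy hy]

private theorem aux_AD {V : Type*} [NormedAddCommGroup V] [InnerProductSpace ℝ V]
    (b : V) (g : ℝ) (q A : V → ℝ) (v : V → V)
    (hq : ∀ y : V, q y = Real.sqrt (‖y‖ ^ 2 - ⟪b, y⟫_ℝ ^ 2))
    (hv : ∀ y : V, v y = y - ⟪b, y⟫_ℝ • b)
    (hA : ∀ y : V, A y = ⟪b, y⟫_ℝ + (g / 2) * q y) :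
    ∀ y : V, 0 < q y →
      HasFDerivAt A (innerSL ℝ b + ((g / 2) * (q y)⁻¹) • innerSL ℝ (v y)) y := by
  intro y hy
  have hq' := aux_qD b q hq v hv y hy
  have h2 : HasFDerivAt (fun x : V => ⟪b, x⟫_ℝ) (innerSL ℝ b) y :=
    (innerSL ℝ b).hasFDerivAt
  have hfun : A = fun x : V => ⟪b, x⟫_ℝ + (g / 2) * q x := funext hA
  rw [hfun]
  refine (h2.add (hq'.const_mul (g / 2))).congr_fderiv ?_
  ext w
  simp only [ContinuousLinearMap.add_apply, ContinuousLinearMap.smul_apply,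
    innerSL_apply_apply, smul_eq_mul]
  ring

private theorem aux_keyD {V : Type*} [NormedAddCommGroup V] [InnerProductSpace ℝ V]
    (b : V) (g h : ℝ) (hg : |g| < 2) (q A B : V → ℝ) (v t : V → V)
    (hq : ∀ y : V, q y = Real.sqrt (‖y‖ ^ 2 - ⟪b, y⟫_ℝ ^ 2))
    (hv : ∀ y : V, v y = y - ⟪b, y⟫_ℝ • b)
    (hA : ∀ y : V, A y = ⟪b, y⟫_ℝ + (g / 2) * q y)
    (hB : ∀ y : V, B y = ⟪b, y⟫_ℝ ^ 2 + g * ⟪b, y⟫_ℝ * q y + q y ^ 2)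
    (ht : ∀ y : V, t y = y + (g / 2) • (q y • b + (⟪b, y⟫_ℝ / q y) • v y)) :
    ∀ y z : V, 0 < q y → 0 < q z →
      HasFDerivAt (fun x : V => (A x * A z + h ^ 2 * (⟪x, z⟫_ℝ - ⟪b, x⟫_ℝ * ⟪b, z⟫_ℝ))
          / Real.sqrt (B x * B z))
        ((Real.sqrt (B y * B z))⁻¹ •
            ((A z) • (innerSL ℝ b + ((g / 2) * (q y)⁻¹) • innerSL ℝ (v y))
              + h ^ 2 • innerSL ℝ (v z))
          - ((A y * A z + h ^ 2 * (⟪y, z⟫_ℝ - ⟪b, y⟫_ℝ * ⟪b, z⟫_ℝ))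
              / Real.sqrt (B y * B z) / B y) • innerSL ℝ (t y)) y := by
  intro y z hy hz
  have hq' := aux_qD b q hq v hv y hy
  have hB' := aux_BD b g q B v t hq hv hB ht y hy
  have hBy := aux_Bpos b g hg q B hB y hy
  have hBz := aux_Bpos b g hg q B hB z hz
  have hBB : 0 < B y * B z := mul_pos hBy hBz
  have hs : 0 < Real.sqrt (B y * B z) := Real.sqrt_pos.mpr hBB
  have hs2 : Real.sqrt (B y * B z) ^ 2 = B y * B z := Real.sq_sqrt hBB.le
  have h2 : HasFDerivAt (fun x : V => ⟪b, x⟫_ℝ) (innerSL ℝ b) y :=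
    (innerSL ℝ b).hasFDerivAt
  have hAD := aux_AD b g q A v hq hv hA y hy
  have hz' : HasFDerivAt (fun x : V => ⟪z, x⟫_ℝ) (innerSL ℝ z) y :=
    (innerSL ℝ z).hasFDerivAt
  have hN : HasFDerivAt
      (fun x : V => (A x * A z + h ^ 2 * (⟪x, z⟫_ℝ - ⟪b, x⟫_ℝ * ⟪b, z⟫_ℝ)))
      ((A z) • (innerSL ℝ b + ((g / 2) * (q y)⁻¹) • innerSL ℝ (v y))
        + h ^ 2 • innerSL ℝ (v z)) y := by
    have hfun : (fun x : V => (A x * A z + h ^ 2 * (⟪x, z⟫_ℝ - ⟪b, x⟫_ℝ * ⟪b, z⟫_ℝ)))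
        = fun x : V => (A x * A z + h ^ 2 * (⟪z, x⟫_ℝ - ⟪b, x⟫_ℝ * ⟪b, z⟫_ℝ)) := by
      funext x; rw [real_inner_comm]
    rw [hfun]
    have hD := (hAD.mul_const (A z)).add
      (((hz'.sub (h2.mul_const ⟪b, z⟫_ℝ)).const_mul (h ^ 2)))
    refine hD.congr_fderiv ?_
    ext w
    simp only [ContinuousLinearMap.add_apply, ContinuousLinearMap.smul_apply,
      ContinuousLinearMap.sub_apply, innerSL_apply_apply, smul_eq_mul, hv z,
      inner_sub_left, real_inner_smul_left]
  have hS : HasFDerivAt (fun x : V => Real.sqrt (B x * B z))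
      ((1 / (2 * Real.sqrt (B y * B z))) • ((B z) • ((2 : ℝ) • innerSL ℝ (t y)))) y :=
    (Real.hasDerivAt_sqrt (ne_of_gt hBB)).comp_hasFDerivAt y (hB'.mul_const (B z))
  have hSinv := (hasDerivAt_inv (ne_of_gt hs)).comp_hasFDerivAt y hS
  have hD := hN.mul hSinv
  have hfun3 : (fun x : V => (A x * A z + h ^ 2 * (⟪x, z⟫_ℝ - ⟪b, x⟫_ℝ * ⟪b, z⟫_ℝ))
      / Real.sqrt (B x * B z))
      = fun x : V => (A x * A z + h ^ 2 * (⟪x, z⟫_ℝ - ⟪b, x⟫_ℝ * ⟪b, z⟫_ℝ))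
        * (Real.sqrt (B x * B z))⁻¹ := by
    funext x; rw [div_eq_mul_inv]
  rw [hfun3]
  refine hD.congr_fderiv ?_
  ext w
  simp only [ContinuousLinearMap.add_apply, ContinuousLinearMap.smul_apply,
    ContinuousLinearMap.sub_apply, innerSL_apply_apply, smul_eq_mul, Function.comp_apply]
  have ha := Real.sq_sqrt hBy.le
  have hc := Real.sq_sqrt hBz.le
  field_simp
  rw [hs2]
  set a := Real.sqrt (B y)
  set c := Real.sqrt (B z)
  rw [← ha, ← hc]
  ring

set_option maxHeartbeats 2000000 in
/-- In the Finsleroid setting, for `y₁, y₂` with `q(y₁) > 0` and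
`q(y₂) > 0`, the mixed second derivative of `λ` (first in the first argument, then in
the second) at `(y₁, y₂)`, applied to directions `(w₁, w₂)`, equals the stated explicit
expression.  With `β_y(w) = ⟨b,w⟩ + (g/2)⟨v(y),w⟩/q(y)`, the mixed derivative applied
to `(w₁, w₂)` is encoded as
`(fderiv ℝ (fun z => fderiv ℝ (fun y => lam y z) y₁) y₂ w₂) w₁`. -/
theorem finsleroid_lambda_mixed_second_derivative
    {V : Type*} [NormedAddCommGroup V] [InnerProductSpace ℝ V] [FiniteDimensional ℝ V]
    (b : V) (hb : ‖b‖ = 1) (g h : ℝ) (hg : |g| < 2)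
    (hh : h = Real.sqrt (1 - g ^ 2 / 4))
    (q A B : V → ℝ) (v t : V → V) (lam : V → V → ℝ)
    (hq : ∀ y : V, q y = Real.sqrt (‖y‖ ^ 2 - ⟪b, y⟫_ℝ ^ 2))
    (hv : ∀ y : V, v y = y - ⟪b, y⟫_ℝ • b)
    (hA : ∀ y : V, A y = ⟪b, y⟫_ℝ + (g / 2) * q y)
    (hB : ∀ y : V, B y = ⟪b, y⟫_ℝ ^ 2 + g * ⟪b, y⟫_ℝ * q y + q y ^ 2)
    (ht : ∀ y : V, t y = y + (g / 2) • (q y • b + (⟪b, y⟫_ℝ / q y) • v y))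
    (hlam : ∀ y₁ y₂ : V, y₁ ≠ 0 → y₂ ≠ 0 →
      lam y₁ y₂ = (A y₁ * A y₂ + h ^ 2 * (⟪y₁, y₂⟫_ℝ - ⟪b, y₁⟫_ℝ * ⟪b, y₂⟫_ℝ))
        / Real.sqrt (B y₁ * B y₂)) :
    ∀ y₁ y₂ : V, 0 < q y₁ → 0 < q y₂ → ∀ w₁ w₂ : V,
      (fderiv ℝ (fun z => fderiv ℝ (fun y => lam y z) y₁) y₂ w₂) w₁
        = ((⟪b, w₁⟫_ℝ + (g / 2) * ⟪v y₁, w₁⟫_ℝ / q y₁)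
              * (⟪b, w₂⟫_ℝ + (g / 2) * ⟪v y₂, w₂⟫_ℝ / q y₂)
            + h ^ 2 * (⟪w₁, w₂⟫_ℝ - ⟪b, w₁⟫_ℝ * ⟪b, w₂⟫_ℝ)) / Real.sqrt (B y₁ * B y₂)
          - ((⟪b, w₁⟫_ℝ + (g / 2) * ⟪v y₁, w₁⟫_ℝ / q y₁) * A y₂ + h ^ 2 * ⟪v y₂, w₁⟫_ℝ)
              * ⟪t y₂, w₂⟫_ℝ / (B y₂ * Real.sqrt (B y₁ * B y₂))
          - (⟪t y₁, w₁⟫_ℝ / B y₁)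
              * (((⟪b, w₂⟫_ℝ + (g / 2) * ⟪v y₂, w₂⟫_ℝ / q y₂) * A y₁
                    + h ^ 2 * ⟪v y₁, w₂⟫_ℝ) / Real.sqrt (B y₁ * B y₂)
                  - lam y₁ y₂ * ⟪t y₂, w₂⟫_ℝ / B y₂) := by
  intro y₁ y₂ hq1 hq2 w₁ w₂
  have hqcont : Continuous q := by
    have : q = fun y : V => Real.sqrt (‖y‖ ^ 2 - ⟪b, y⟫_ℝ ^ 2) := funext hq
    rw [this]
    exact Real.continuous_sqrt.comp (((continuous_norm.pow 2)).sub
      ((continuous_const.inner continuous_id).pow 2))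
  have hne : ∀ x : V, 0 < q x → x ≠ 0 := by
    intro x hx h0
    subst h0
    rw [hq 0] at hx
    simp at hx
  have hBy1 := aux_Bpos b g hg q B hB y₁ hq1
  have hBy2 := aux_Bpos b g hg q B hB y₂ hq2
  have hBB : 0 < B y₁ * B y₂ := mul_pos hBy1 hBy2
  have hspos : 0 < Real.sqrt (B y₁ * B y₂) := Real.sqrt_pos.mpr hBB
  set Df : V → V →L[ℝ] ℝ := fun z =>
    (Real.sqrt (B y₁ * B z))⁻¹ •
        ((A z) • (innerSL ℝ b + ((g / 2) * (q y₁)⁻¹) • innerSL ℝ (v y₁))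
          + h ^ 2 • innerSL ℝ (v z))
      - ((A y₁ * A z + h ^ 2 * (⟪y₁, z⟫_ℝ - ⟪b, y₁⟫_ℝ * ⟪b, z⟫_ℝ))
          / Real.sqrt (B y₁ * B z) / B y₁) • innerSL ℝ (t y₁) with hDf
  -- Step A: inner fderiv identification
  have hfd1 : ∀ z : V, 0 < q z → fderiv ℝ (fun y => lam y z) y₁ = Df z := by
    intro z hz
    have hzne := hne z hz
    have hev : (fun y => lam y z) =ᶠ[nhds y₁]
        (fun y => (A y * A z + h ^ 2 * (⟪y, z⟫_ℝ - ⟪b, y⟫_ℝ * ⟪b, z⟫_ℝ))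
          / Real.sqrt (B y * B z)) := by
      filter_upwards [hqcont.continuousAt.eventually (eventually_gt_nhds hq1)] with x hx
      exact hlam x z (hne x hx) hzne
    rw [hev.fderiv_eq, hDf]
    exact (aux_keyD b g h hg q A B v t hq hv hA hB ht y₁ z hq1 hz).fderiv
  -- Step B: outer function agrees with Df near y₂
  have hev2 : (fun z => fderiv ℝ (fun y => lam y z) y₁) =ᶠ[nhds y₂] Df := by
    filter_upwards [hqcont.continuousAt.eventually (eventually_gt_nhds hq2)] with z hz
    exact hfd1 z hz
  -- derivative building blocks at y₂
  have dB2 := aux_BD b g q B v t hq hv hB ht y₂ hq2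
  have dA2 := aux_AD b g q A v hq hv hA y₂ hq2
  have dS : HasFDerivAt (fun z : V => Real.sqrt (B y₁ * B z))
      ((1 / (2 * Real.sqrt (B y₁ * B y₂))) • ((B y₁) • ((2 : ℝ) • innerSL ℝ (t y₂)))) y₂ :=
    (Real.hasDerivAt_sqrt (ne_of_gt hBB)).comp_hasFDerivAt y₂ (dB2.const_mul (B y₁))
  have dSinv : HasFDerivAt (fun z : V => (Real.sqrt (B y₁ * B z))⁻¹)
      (-(Real.sqrt (B y₁ * B y₂) ^ 2)⁻¹ •
        ((1 / (2 * Real.sqrt (B y₁ * B y₂))) • ((B y₁) • ((2 : ℝ) • innerSL ℝ (t y₂))))) y₂ :=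
    (hasDerivAt_inv (ne_of_gt hspos)).comp_hasFDerivAt y₂ dS
  have hI : HasFDerivAt (fun z : V => ⟪y₁, z⟫_ℝ - ⟪b, y₁⟫_ℝ * ⟪b, z⟫_ℝ)
      (innerSL ℝ y₁ - ⟪b, y₁⟫_ℝ • innerSL ℝ b) y₂ :=
    (innerSL ℝ y₁).hasFDerivAt.sub ((innerSL ℝ b).hasFDerivAt.const_mul ⟪b, y₁⟫_ℝ)
  have dN := (dA2.const_mul (A y₁)).add (hI.const_mul (h ^ 2))
  have dvlin : DifferentiableAt ℝ (fun z : V => innerSL ℝ (v z)) y₂ := by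
    have hfn : (fun z : V => innerSL ℝ (v z))
        = fun z : V => (innerSL ℝ : V →L[ℝ] V →L[ℝ] ℝ) (z - ⟪b, z⟫_ℝ • b) := by
      funext z; rw [hv z]
    rw [hfn]
    exact ((innerSL ℝ : V →L[ℝ] V →L[ℝ] ℝ).differentiableAt.comp _
      (differentiableAt_id.sub (((innerSL ℝ b).differentiableAt).smul_const b)))
  have dDf : DifferentiableAt ℝ Df y₂ := by
    rw [hDf]
    have hdivfn : (fun z : V => (A y₁ * A z + h ^ 2 * (⟪y₁, z⟫_ℝ - ⟪b, y₁⟫_ℝ * ⟪b, z⟫_ℝ))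
        / Real.sqrt (B y₁ * B z) / B y₁)
        = fun z : V => ((A y₁ * A z + h ^ 2 * (⟪y₁, z⟫_ℝ - ⟪b, y₁⟫_ℝ * ⟪b, z⟫_ℝ))
          * (Real.sqrt (B y₁ * B z))⁻¹) * (B y₁)⁻¹ := by
      funext z; rw [div_eq_mul_inv, div_eq_mul_inv]
    apply DifferentiableAt.sub
    · exact dSinv.differentiableAt.smul
        ((dA2.differentiableAt.smul_const _).add (dvlin.const_smul (h ^ 2)))
    · exact DifferentiableAt.smul_const (by rw [hdivfn]; exact
        (dN.differentiableAt.mul dSinv.differentiableAt).mul_const _) _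
  -- the mixed derivative via clm_apply
  have happly : (fderiv ℝ (fun z => fderiv ℝ (fun y => lam y z) y₁) y₂ w₂) w₁
      = (fderiv ℝ (fun z => Df z w₁) y₂) w₂ := by
    rw [hev2.fderiv_eq, fderiv_clm_apply dDf (differentiableAt_const w₁)]
    simp
  rw [happly]
  -- scalar form of z ↦ Df z w₁
  have happly2 : (fun z => Df z w₁) = fun z =>
      (Real.sqrt (B y₁ * B z))⁻¹
        * (A z * (⟪b, w₁⟫_ℝ + g / 2 * (q y₁)⁻¹ * ⟪v y₁, w₁⟫_ℝ)
            + h ^ 2 * (⟪w₁, z⟫_ℝ - ⟪b, z⟫_ℝ * ⟪b, w₁⟫_ℝ))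
      - ((A y₁ * A z + h ^ 2 * (⟪y₁, z⟫_ℝ - ⟪b, y₁⟫_ℝ * ⟪b, z⟫_ℝ))
          * (Real.sqrt (B y₁ * B z))⁻¹) * (B y₁)⁻¹ * ⟪t y₁, w₁⟫_ℝ := by
    funext z
    rw [hDf]
    simp only [ContinuousLinearMap.sub_apply, ContinuousLinearMap.add_apply,
      ContinuousLinearMap.smul_apply, innerSL_apply_apply, smul_eq_mul]
    rw [hv z, inner_sub_left, real_inner_smul_left, real_inner_comm z w₁,
      div_eq_mul_inv, div_eq_mul_inv]
    ring
  rw [happly2]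
  -- derivative of the scalar function
  have hIw : HasFDerivAt (fun z : V => ⟪w₁, z⟫_ℝ - ⟪b, z⟫_ℝ * ⟪b, w₁⟫_ℝ)
      (innerSL ℝ w₁ - ⟪b, w₁⟫_ℝ • innerSL ℝ b) y₂ := by
    have := ((innerSL ℝ w₁).hasFDerivAt (x := y₂)).sub
      (((innerSL ℝ b).hasFDerivAt (x := y₂)).mul_const ⟪b, w₁⟫_ℝ)
    exact this
  have n1D := (dA2.mul_const (⟪b, w₁⟫_ℝ + g / 2 * (q y₁)⁻¹ * ⟪v y₁, w₁⟫_ℝ)).add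
    (hIw.const_mul (h ^ 2))
  have hE := (dSinv.mul n1D).sub (((dN.mul dSinv).mul_const ((B y₁)⁻¹)).mul_const ⟪t y₁, w₁⟫_ℝ)
  have hE' : HasFDerivAt (fun z =>
      (Real.sqrt (B y₁ * B z))⁻¹
        * (A z * (⟪b, w₁⟫_ℝ + g / 2 * (q y₁)⁻¹ * ⟪v y₁, w₁⟫_ℝ)
            + h ^ 2 * (⟪w₁, z⟫_ℝ - ⟪b, z⟫_ℝ * ⟪b, w₁⟫_ℝ))
      - ((A y₁ * A z + h ^ 2 * (⟪y₁, z⟫_ℝ - ⟪b, y₁⟫_ℝ * ⟪b, z⟫_ℝ))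
          * (Real.sqrt (B y₁ * B z))⁻¹) * (B y₁)⁻¹ * ⟪t y₁, w₁⟫_ℝ) _ y₂ := hE
  rw [hE'.fderiv]
  -- final algebraic identity
  rw [hlam y₁ y₂ (hne y₁ hq1) (hne y₂ hq2)]
  simp only [ContinuousLinearMap.sub_apply, ContinuousLinearMap.add_apply,
    ContinuousLinearMap.smul_apply, innerSL_apply_apply, smul_eq_mul, Function.comp_apply,
    Pi.add_apply, Pi.mul_apply]
  rw [hv y₁, hv y₂]
  simp only [inner_sub_left, real_inner_smul_left]
  rw [real_inner_comm w₁ y₂]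
  have ha := Real.sq_sqrt hBy1.le
  have hc := Real.sq_sqrt hBy2.le
  field_simp
  rw [Real.sq_sqrt hBB.le]
  set a := Real.sqrt (B y₁)
  set c := Real.sqrt (B y₂)
  rw [← ha, ← hc]
  ring
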